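/- If T is a well-founded closed tree on a Polish space X (i.e. T ⊆ ⋃ₙ Xⁿ closed in each Xⁿ with the product topology, ordered by extension, with no infinite branch), then the order o(T) of T is a countable ordinal. -/

import Mathlib

open Ordinal

/-- The derived tree of a tree of finite sequences (ordered by extension):
remove all maximal elements. -/
def derivedTree {X : Type*} (T : Set (List X)) : Set (List X) :=
  {l ∈ T | ∃ l' ∈ T, l <+: l' ∧ l ≠ l'}

/-- Transfinite iterates `T^α` of the derivation. -/
noncomputable def derivTreeIter {X : Type*} (T : Set (List X)) : Ordinal → Set (List X) :=
  fun o =>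
    Ordinal.limitRecOn o T (fun _ S => derivedTree S)
      (fun o _ ih => ⋂ (β : Ordinal) (h : β < o), ih β h)

/-- A tree is well-founded if it has no infinite linearly ordered subset,
equivalently no strictly increasing infinite chain of nodes. -/
def TreeWellFounded {X : Type*} (T : Set (List X)) : Prop :=
  ¬ ∃ f : ℕ → List X, (∀ n, f n ∈ T) ∧ ∀ n, f n <+: f (n + 1) ∧ f n ≠ f (n + 1)

/-- A tree on a topological space is closed if for each `n` its set of nodes of
length `n` is closed in `Xⁿ` with the product topology. -/
def TreeClosed {X : Type*} [TopologicalSpace X] (T : Set (List X)) : Prop :=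
  ∀ n : ℕ, IsClosed {v : Fin n → X | List.ofFn v ∈ T}

namespace TreeAux

variable {Y : Type*}

theorem iter_zero (U : Set (List Y)) : derivTreeIter U 0 = U :=
  Ordinal.limitRecOn_zero ..

theorem iter_succ (U : Set (List Y)) (α : Ordinal) :
    derivTreeIter U (Order.succ α) = derivedTree (derivTreeIter U α) :=
  Ordinal.limitRecOn_succ ..

theorem iter_limit (U : Set (List Y)) {α : Ordinal} (h : Order.IsSuccLimit α) :
    derivTreeIter U α = ⋂ (β : Ordinal) (_ : β < α), derivTreeIter U β :=
  Ordinal.limitRecOn_limit _ _ _ _ h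

theorem derivedTree_subset (U : Set (List Y)) : derivedTree U ⊆ U := fun _ h => h.1

theorem iter_antitone (U : Set (List Y)) : ∀ {α β : Ordinal}, β ≤ α →
    derivTreeIter U α ⊆ derivTreeIter U β := by
  intro α
  induction α using Ordinal.induction with
  | _ α IH =>
    intro β hβ
    rcases eq_or_lt_of_le hβ with rfl | hlt
    · exact subset_rfl
    rcases Ordinal.zero_or_succ_or_isSuccLimit α with rfl | ⟨γ, rfl⟩ | hl
    · exact absurd hlt (not_lt_zero (a := β))
    · intro x hx
      have h1 : x ∈ derivTreeIter U γ := by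
        rw [iter_succ] at hx; exact derivedTree_subset _ hx
      exact IH γ (Order.lt_succ γ) (Order.lt_succ_iff.mp hlt) h1
    · intro x hx
      rw [iter_limit U hl] at hx
      exact Set.mem_iInter.mp (Set.mem_iInter.mp hx β) hlt

theorem mem_iter_of_prefix (U : Set (List Y)) {l l' : List Y} (hpre : l <+: l') (hne : l ≠ l')
    (hlU : l ∈ U) : ∀ {α : Ordinal}, l' ∈ derivTreeIter U α → l ∈ derivTreeIter U α := by
  intro α
  induction α using Ordinal.induction with
  | _ α IH =>
    intro hl'
    rcases Ordinal.zero_or_succ_or_isSuccLimit α with rfl | ⟨γ, rfl⟩ | hl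
    · rwa [iter_zero]
    · rw [iter_succ] at hl' ⊢
      have h1 : l' ∈ derivTreeIter U γ := hl'.1
      exact ⟨IH γ (Order.lt_succ γ) h1, l', h1, hpre, hne⟩
    · rw [iter_limit U hl] at hl' ⊢
      exact Set.mem_iInter.mpr fun β => Set.mem_iInter.mpr fun hβ =>
        IH β hβ (Set.mem_iInter.mp (Set.mem_iInter.mp hl' β) hβ)

theorem mem_iter_succ_of_prefix (U : Set (List Y)) {l l' : List Y} {α : Ordinal}
    (hl' : l' ∈ derivTreeIter U α) (hpre : l <+: l') (hne : l ≠ l') (hlU : l ∈ U) :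
    l ∈ derivTreeIter U (Order.succ α) := by
  rw [iter_succ]
  exact ⟨mem_iter_of_prefix U hpre hne hlU hl', l', hl', hpre, hne⟩

theorem exists_empty_iter (U : Set (List Y)) (hc : U.Countable) (hwf : TreeWellFounded U) :
    ∃ α : Ordinal, α < (Cardinal.aleph 1).ord ∧ derivTreeIter U α = ∅ := by
  by_contra hcon
  push_neg at hcon
  by_cases hstab : ∃ α : Ordinal, α < (Cardinal.aleph 1).ord ∧
      derivTreeIter U (Order.succ α) = derivTreeIter U α
  · obtain ⟨α, hα, heq⟩ := hstab
    obtain ⟨w₀, hw₀⟩ := hcon α hα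
    have hext : ∀ w ∈ derivTreeIter U α, ∃ w' ∈ derivTreeIter U α, w <+: w' ∧ w ≠ w' := by
      intro w hw
      have h2 : w ∈ derivedTree (derivTreeIter U α) := by
        rw [← iter_succ, heq]; exact hw
      exact h2.2
    have hSU : derivTreeIter U α ⊆ U := by
      have := iter_antitone U (zero_le (a := α))
      rwa [iter_zero] at this
    choose g hg1 hg2 hg3 using hext
    let F : {w // w ∈ derivTreeIter U α} → {w // w ∈ derivTreeIter U α} :=
      fun p => ⟨g p.1 p.2, hg1 p.1 p.2⟩
    refine hwf ⟨fun n => (F^[n] ⟨w₀, hw₀⟩).1, fun n => hSU (F^[n] ⟨w₀, hw₀⟩).2, fun n => ?_⟩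
    simp only []
    rw [show F^[n+1] ⟨w₀, hw₀⟩ = F (F^[n] ⟨w₀, hw₀⟩) from Function.iterate_succ_apply' F n _]
    exact ⟨hg2 _ _, hg3 _ _⟩
  · push_neg at hstab
    have hstrict : ∀ α : Ordinal, α < (Cardinal.aleph 1).ord →
        ∃ w, w ∈ derivTreeIter U α ∧ w ∉ derivTreeIter U (Order.succ α) := by
      intro α hα
      by_contra h
      push_neg at h
      refine hstab α hα (Set.Subset.antisymm (iter_antitone U (Order.le_succ α)) h)
    choose e he1 he2 using hstrict
    have hinj : Function.Injective
        (fun p : Set.Iio ((Cardinal.aleph 1).ord) => e p.1 p.2) := by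
      rintro ⟨p, hp⟩ ⟨q, hq⟩ hpq
      simp only at hpq
      by_contra hne
      have hne' : p ≠ q := fun h => hne (by simpa using h)
      rcases hne'.lt_or_gt with h | h
      · have hle : Order.succ p ≤ q := Order.succ_le_of_lt h
        have : e q hq ∈ derivTreeIter U (Order.succ p) := iter_antitone U hle (he1 q hq)
        rw [← hpq] at this
        exact he2 p hp this
      · have hle : Order.succ q ≤ p := Order.succ_le_of_lt h
        have : e p hp ∈ derivTreeIter U (Order.succ q) := iter_antitone U hle (he1 p hp)
        rw [hpq] at this
        exact he2 q hq this
    have hrange : ∀ p : Set.Iio ((Cardinal.aleph 1).ord), e p.1 p.2 ∈ U := by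
      intro p
      have := iter_antitone U (zero_le (a := p.1)) (he1 p.1 p.2)
      rwa [iter_zero] at this
    haveI := hc.to_subtype
    have hinj2 : Function.Injective
        (fun p : Set.Iio ((Cardinal.aleph 1).ord) => (⟨e p.1 p.2, hrange p⟩ : U)) := by
      intro p q hpq
      exact hinj (congrArg Subtype.val hpq)
    haveI : Countable (Set.Iio ((Cardinal.aleph 1).ord)) := hinj2.countable
    have h1 : Cardinal.mk (Set.Iio ((Cardinal.aleph 1).ord)) ≤ Cardinal.aleph0 :=
      Cardinal.mk_le_aleph0_iff.mpr this
    rw [Ordinal.mk_Iio_ordinal, Cardinal.card_ord] at h1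
    rw [← Cardinal.lift_aleph0.{u_2 + 1, u_2}] at h1
    exact absurd (Cardinal.lift_le.mp h1) Cardinal.aleph0_lt_aleph_one.not_ge

end TreeAux
section MetricAux

open TreeAux

variable {X : Type*} [MetricSpace X] [Inhabited X]

/-- Pointwise closeness of same-length lists. -/
def CloseL (ε : ℝ) (a b : List X) : Prop :=
  a.length = b.length ∧ ∀ q < a.length, dist (a.getD q default) (b.getD q default) < ε

/-- A strictly increasing chain of length `k` in `T`. -/
def ChainIn (T : Set (List X)) (L : ℕ → List X) (k : ℕ) : Prop :=
  (∀ i < k, L i ∈ T) ∧ ∀ i, i + 1 < k → L i <+: L (i + 1) ∧ L i ≠ L (i + 1)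

/-- Structural condition on nodes of the witness tree: layer `j` has `j+1`
entries, all of them lists over `s`. -/
def LayerOK (s : Set X) (w : List (List (List X))) : Prop :=
  ∀ j < w.length, (w.getD j []).length = j + 1 ∧ ∀ p ∈ w.getD j [], ∀ x ∈ p, x ∈ s

/-- The chain `L` approximates all layers of the node `w`. -/
def CloseCond (w : List (List (List X))) (L : ℕ → List X) : Prop :=
  ∀ j < w.length, ∀ i ≤ j, CloseL ((2⁻¹ : ℝ) ^ (j + 1)) (L i) ((w.getD j []).getD i [])

/-- The countable witness tree (Kunen–Martin style). -/
def Wtree (T : Set (List X)) (s : Set X) : Set (List (List (List X))) :=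
  {w | LayerOK s w ∧ ∃ L : ℕ → List X, ChainIn T L w.length ∧ CloseCond w L}

theorem exists_approx {s : Set X} (hs : Dense s) (l : List X) {ε : ℝ} (hε : 0 < ε) :
    ∃ d : List X, CloseL ε l d ∧ ∀ x ∈ d, x ∈ s := by
  induction l with
  | nil => exact ⟨[], ⟨rfl, by simp⟩, by simp⟩
  | cons a l ih =>
    obtain ⟨d, ⟨hdl, hdc⟩, hds⟩ := ih
    obtain ⟨y, hys, hy⟩ := hs.exists_dist_lt a hε
    refine ⟨y :: d, ⟨by simp [hdl], ?_⟩, ?_⟩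
    · intro q hq
      cases q with
      | zero => simpa using hy
      | succ q =>
        simp only [List.getD_cons_succ]
        exact hdc q (by simpa using hq)
    · intro x hx
      rcases List.mem_cons.mp hx with rfl | hx
      · exact hys
      · exact hds x hx

theorem countable_lists {α : Type*} {s : Set α} (hs : s.Countable) :
    {l : List α | ∀ x ∈ l, x ∈ s}.Countable := by
  haveI := hs.to_subtype
  have h : {l : List α | ∀ x ∈ l, x ∈ s} ⊆
      Set.range (fun l : List s => l.map Subtype.val) := by
    intro l hl
    refine ⟨l.attach.map (fun x => ⟨x.1, hl x.1 x.2⟩), ?_⟩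
    simp [List.map_map]
  exact (Set.countable_range _).mono h

theorem wtree_countable (T : Set (List X)) {s : Set X} (hs : s.Countable) :
    (Wtree T s).Countable := by
  have h1 := countable_lists (countable_lists (countable_lists hs))
  refine h1.mono ?_
  rintro w ⟨hlay, -⟩
  intro t ht
  obtain ⟨j, hj, rfl⟩ := List.mem_iff_getElem.mp ht
  have := (hlay j hj).2
  rw [List.getD_eq_getElem _ _ hj] at this
  intro p hp x hx
  exact this p hp x hx

theorem ofFn_getD {α : Type*} [Inhabited α] (l : List α) {m : ℕ} (h : l.length = m) :
    List.ofFn (fun q : Fin m => l.getD q default) = l := by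
  subst h
  conv_rhs => rw [← List.ofFn_getElem (xs := l)]
  refine congrArg List.ofFn (funext fun q => ?_)
  exact List.getD_eq_getElem _ _ q.isLt

theorem List.IsPrefix.getD_eq {α : Type*} {a b : List α} (h : a <+: b) {j : ℕ}
    (hj : j < a.length) (d : α) : a.getD j d = b.getD j d := by
  rw [List.getD_eq_getElem _ _ hj, List.getD_eq_getElem _ _ (hj.trans_le h.length_le),
    h.getElem hj]

theorem node_mem_iter (T : Set (List X)) {s : Set X} (hs : Dense s) :
    ∀ (α : Ordinal) (k : ℕ) (w : List (List (List X))) (L : ℕ → List X),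
      w.length = k + 1 → LayerOK s w → ChainIn T L w.length → CloseCond w L →
      L k ∈ derivTreeIter T α → w ∈ derivTreeIter (Wtree T s) α := by
  intro α
  induction α using Ordinal.induction with
  | _ α IH =>
    intro k w L hlen hlay hchain hclose hk
    rcases Ordinal.zero_or_succ_or_isSuccLimit α with rfl | ⟨γ, rfl⟩ | hl
    · rw [iter_zero]
      exact ⟨hlay, L, hlen ▸ hchain, hclose⟩
    · rw [iter_succ] at hk
      obtain ⟨hkγ, l', hl', hpre, hne⟩ := hk
      have hεpos : (0:ℝ) < (2⁻¹ : ℝ) ^ (k + 2) := by positivity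
      set L' : ℕ → List X := fun i => if i < k + 1 then L i else l' with hL'
      choose d hd1 hd2 using fun i => exists_approx hs (L' i) hεpos
      set t' : List (List X) := List.ofFn (fun i : Fin (k + 2) => d i) with ht'
      set w' := w ++ [t'] with hw'
      have hw'len : w'.length = (k + 1) + 1 := by simp [hw', hlen]
      have hgetD : ∀ j < k + 1, w'.getD j [] = w.getD j [] := by
        intro j hj
        exact List.getD_append _ _ _ _ (by omega)
      have hgetD2 : w'.getD (k + 1) [] = t' := by
        rw [hw', List.getD_append_right _ _ _ _ (by omega : w.length ≤ k + 1)]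
        simp [hlen]
      have htget : ∀ i < k + 2, t'.getD i [] = d i := by
        intro i hi
        rw [ht', List.getD_eq_getElem _ _ (by simp; omega)]
        rw [List.getElem_ofFn]
      have hlay' : LayerOK s w' := by
        intro j hj
        rw [hw'len] at hj
        by_cases hjk : j < k + 1
        · rw [hgetD j hjk]
          exact hlay j (by omega)
        · have hj2 : j = k + 1 := by omega
          subst hj2
          rw [hgetD2]
          refine ⟨by simp [ht'], ?_⟩
          intro p hp
          rw [ht'] at hp
          obtain ⟨i, rfl⟩ := List.mem_ofFn.mp hp
          exact hd2 i
      have hchain' : ChainIn T L' w'.length := by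
        rw [hw'len]
        constructor
        · intro i hi
          by_cases hik : i < k + 1
          · simpa [hL', hik, Nat.lt_add_one_iff.mp hik] using hchain.1 i (by omega)
          · have e1 : L' i = l' := if_neg hik
            rw [e1]
            have h2 := iter_antitone T (zero_le (a := γ)) hl'
            rw [iter_zero] at h2
            exact h2
        · intro i hi
          by_cases hik : i + 1 < k + 1
          · have e1 : L' i = L i := if_pos (by omega)
            have e2 : L' (i + 1) = L (i + 1) := if_pos (by omega)
            rw [e1, e2]
            exact hchain.2 i (by omega)
          · have hi2 : i = k := by omega
            have e1 : L' i = L i := if_pos (by omega)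
            have e2 : L' (i + 1) = l' := if_neg (by omega)
            rw [e1, e2, hi2]
            exact ⟨hpre, hne⟩
      have hclose' : CloseCond w' L' := by
        intro j hj i hij
        rw [hw'len] at hj
        by_cases hjk : j < k + 1
        · rw [hgetD j hjk]
          have e1 : L' i = L i := if_pos (by omega)
          rw [e1]
          exact hclose j (by omega) i hij
        · have hj2 : j = k + 1 := by omega
          subst hj2
          rw [hgetD2, htget i (by omega)]
          exact hd1 i
      have hw'W : w' ∈ derivTreeIter (Wtree T s) γ := by
        refine IH γ (Order.lt_succ γ) (k + 1) w' L' hw'len hlay' hchain' hclose' ?_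
        have e2 : L' (k + 1) = l' := if_neg (by omega)
        rw [e2]
        exact hl'
      refine mem_iter_succ_of_prefix _ hw'W (List.prefix_append w [t']) ?_
        ⟨hlay, L, hlen ▸ hchain, hclose⟩
      intro h
      have := congrArg List.length h
      simp [hw'] at this
    · rw [iter_limit _ hl] at hk ⊢
      exact Set.mem_iInter.mpr fun β => Set.mem_iInter.mpr fun hβ =>
        IH β hβ k w L hlen hlay hchain hclose (Set.mem_iInter.mp (Set.mem_iInter.mp hk β) hβ)

end MetricAux
section WF

open TreeAux Filter

variable {X : Type*} [MetricSpace X] [Inhabited X]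

theorem wtree_wf [CompleteSpace X] (T : Set (List X)) (hcl : TreeClosed T)
    (hwf : TreeWellFounded T) (s : Set X) : TreeWellFounded (Wtree T s) := by
  rintro ⟨f, hfW, hfc⟩
  set k : ℕ → ℕ := fun n => (f n).length with hkdef
  have hkmono : StrictMono k := by
    apply strictMono_nat_of_lt_succ
    intro n
    have h1 := (hfc n).1.length_le
    rcases eq_or_lt_of_le h1 with h | h
    · exact absurd ((hfc n).1.eq_of_length h) (hfc n).2
    · exact h
  have hkn : ∀ n, n ≤ k n := fun n => hkmono.le_apply
  have hpref : ∀ {n m : ℕ}, n ≤ m → f n <+: f m := by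
    intro n m h
    induction h with
    | refl => exact List.prefix_refl _
    | step _ ih => exact ih.trans (hfc _).1
  choose L hL1 hL2 using fun n => (hfW n).2
  have hlay : ∀ n, LayerOK s (f n) := fun n => (hfW n).1
  set t : ℕ → List (List X) := fun j => (f (j + 1)).getD j [] with htdef
  have hjk : ∀ j, j < k (j + 1) := fun j => lt_of_lt_of_le (Nat.lt_succ_self j) (hkn (j + 1))
  have htn : ∀ {n j : ℕ}, j < k n → (f n).getD j [] = t j := by
    intro n j hj
    rcases le_total n (j + 1) with h | h
    · exact (hpref h).getD_eq hj []
    · exact ((hpref h).getD_eq (hjk j) []).symm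
  have htlen : ∀ j, (t j).length = j + 1 := fun j => ((hlay (j + 1)) j (hjk j)).1
  have hclose : ∀ n j i, j < k n → i ≤ j →
      CloseL ((2⁻¹ : ℝ) ^ (j + 1)) (L n i) ((t j).getD i []) := by
    intro n j i hj hij
    have := hL2 n j hj i hij
    rwa [htn hj] at this
  have hmemT : ∀ n i, i < k n → L n i ∈ T := fun n i h => (hL1 n).1 i h
  have hchain2 : ∀ n i, i + 1 < k n → L n i <+: L n (i + 1) ∧ L n i ≠ L n (i + 1) :=
    fun n => (hL1 n).2
  set m : ℕ → ℕ := fun i => ((t i).getD i []).length with hmdef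
  have hLlen : ∀ n i, i < k n → (L n i).length = m i := by
    intro n i h
    exact (hclose n i i h le_rfl).1
  -- the coordinate sequences converge
  have key : ∀ i q : ℕ, ∃ x : X,
      Tendsto (fun n => (L n i).getD q default) atTop (nhds x) := by
    intro i q
    apply cauchySeq_tendsto_of_complete
    rw [Metric.cauchySeq_iff']
    intro ε hε
    obtain ⟨M, hM⟩ := exists_pow_lt_of_lt_one hε (by norm_num : (2⁻¹ : ℝ) < 1)
    refine ⟨max (i + 1) (M + 1), ?_⟩
    intro n hn
    set N := max (i + 1) (M + 1) with hN
    by_cases hq : q < m i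
    · -- both terms are close to the corresponding coordinate of layer k N - 1
      have hiN : i + 1 ≤ N := le_max_left _ _
      have hkN : 1 ≤ k N := le_trans (by omega) (hkn N)
      set j := k N - 1 with hj
      have hij : i ≤ j := by
        have := hkn N
        omega
      have hjN : j < k N := by omega
      have hjn : j < k n := lt_of_lt_of_le hjN (hkmono.le_iff_le.mpr hn)
      have hqn : q < (L n i).length := by rw [hLlen n i (lt_of_le_of_lt hij hjn)]; exact hq
      have hqN : q < (L N i).length := by rw [hLlen N i (lt_of_le_of_lt hij hjN)]; exact hq
      have h1 := (hclose n j i hjn hij).2 q hqn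
      have h2 := (hclose N j i hjN hij).2 q hqN
      have hd : dist ((L n i).getD q default) ((L N i).getD q default)
          ≤ dist ((L n i).getD q default) (((t j).getD i []).getD q default)
            + dist ((L N i).getD q default) (((t j).getD i []).getD q default) :=
        dist_triangle_right _ _ _
      have hbound : (2⁻¹ : ℝ) ^ (j + 1) + (2⁻¹ : ℝ) ^ (j + 1) ≤ (2⁻¹ : ℝ) ^ M := by
        have hMj : M ≤ j := by
          have h3 : M + 1 ≤ N := le_max_right _ _
          have := hkn N
          omega
        have h4 : (2⁻¹ : ℝ) ^ (j + 1) + (2⁻¹ : ℝ) ^ (j + 1) = (2⁻¹ : ℝ) ^ j := by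
          ring
        rw [h4]
        exact pow_le_pow_of_le_one (by norm_num) (by norm_num) hMj
      calc dist ((L n i).getD q default) ((L N i).getD q default)
          ≤ _ + _ := hd
        _ < (2⁻¹ : ℝ) ^ (j + 1) + (2⁻¹ : ℝ) ^ (j + 1) := by exact add_lt_add h1 h2
        _ ≤ (2⁻¹ : ℝ) ^ M := hbound
        _ < ε := hM
    · -- both coordinates are `default`
      push_neg at hq
      have hiN : i + 1 ≤ N := le_max_left _ _
      have e1 : (L n i).getD q default = default := by
        apply List.getD_eq_default
        rw [hLlen n i (lt_of_lt_of_le (by omega) (le_trans (hkn N) (hkmono.le_iff_le.mpr hn)))]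
        exact hq
      have e2 : (L N i).getD q default = default := by
        apply List.getD_eq_default
        rw [hLlen N i (lt_of_lt_of_le (by omega) (hkn N))]
        exact hq
      rw [e1, e2]
      simpa using hε
  choose x hx using key
  set g : ℕ → List X := fun i => List.ofFn (fun q : Fin (m i) => x i q) with hgdef
  have hglen : ∀ i, (g i).length = m i := by intro i; simp [hgdef]
  have hvec : ∀ i, Tendsto (fun n => fun q : Fin (m i) => (L n i).getD q default) atTop
      (nhds (fun q : Fin (m i) => x i q)) :=
    fun i => tendsto_pi_nhds.mpr (fun q => hx i q)
  have hgT : ∀ i, g i ∈ T := by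
    intro i
    have hC := hcl (m i)
    have hmem : ∀ᶠ n in atTop,
        (fun q : Fin (m i) => (L n i).getD q default) ∈ {v : Fin (m i) → X | List.ofFn v ∈ T} := by
      filter_upwards [eventually_ge_atTop (i + 1)] with n hn
      have hikn : i < k n := lt_of_lt_of_le (by omega) (le_trans hn (hkn n))
      show List.ofFn _ ∈ T
      rw [ofFn_getD _ (hLlen n i hikn)]
      exact hmemT n i hikn
    exact hC.mem_of_tendsto (hvec i) hmem
  have hmlt : ∀ i, m i < m (i + 1) := by
    intro i
    have h1 : i + 1 + 1 ≤ k (i + 2) := le_trans (by omega) (hkn (i + 2))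
    obtain ⟨hpre2, hne2⟩ := hchain2 (i + 2) i (by omega)
    have h2 := hpre2.length_le
    have h3 : (L (i + 2) i).length ≠ (L (i + 2) (i + 1)).length := by
      intro he
      exact hne2 (hpre2.eq_of_length he)
    have h4 := hLlen (i + 2) i (by omega)
    have h5 := hLlen (i + 2) (i + 1) (by omega)
    omega
  have hxeq : ∀ i q : ℕ, q < m i → x i q = x (i + 1) q := by
    intro i q hq
    refine tendsto_nhds_unique (hx i q) ?_
    apply (hx (i + 1) q).congr'
    filter_upwards [eventually_ge_atTop (i + 2)] with n hn
    obtain ⟨hpre2, hne2⟩ := hchain2 n i (lt_of_lt_of_le (by omega) (le_trans hn (hkn n)))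
    refine (hpre2.getD_eq ?_ default).symm
    rw [hLlen n i (lt_of_lt_of_le (by omega) (le_trans hn (hkn n)))]
    exact hq
  have hgpre : ∀ i, g i <+: g (i + 1) := by
    intro i
    rw [List.prefix_iff_eq_take]
    apply List.ext_getElem
    · rw [List.length_take, hglen, hglen]
      exact (min_eq_left (hmlt i).le).symm
    · intro q h1 h2
      rw [List.getElem_take]
      have hq : q < m i := by
        rw [hglen] at h1
        exact h1
      have hq2 : q < m (i + 1) := lt_of_lt_of_le hq (hmlt i).le
      simp only [hgdef]
      simp only [List.getElem_ofFn]
      exact hxeq i q hq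
  have hgne : ∀ i, g i ≠ g (i + 1) := by
    intro i he
    have := congrArg List.length he
    rw [hglen, hglen] at this
    exact absurd this (hmlt i).ne
  exact hwf ⟨g, hgT, fun i => ⟨hgpre i, hgne i⟩⟩

end WF
open TreeAux

/-- If `T` is a well-founded closed tree on a Polish space, then some countable
iterate of the derivation is empty; that is, the order `o(T)` of `T` is a
countable ordinal. -/
theorem order_lt_omega1_of_wellFounded_closed_tree_on_polish
    {X : Type*} [TopologicalSpace X] [PolishSpace X]
    (T : Set (List X)) (hT : ∀ l ∈ T, l ≠ [])
    (hwf : TreeWellFounded T) (hcl : TreeClosed T) :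
    ∃ α : Ordinal, α < (Cardinal.aleph 1).ord ∧ derivTreeIter T α = ∅ := by
  classical
  rcases isEmpty_or_nonempty X with hX | hX
  · refine ⟨0, ?_, ?_⟩
    · rw [Cardinal.lt_ord]
      simpa using Cardinal.aleph_pos 1
    · rw [iter_zero]
      ext l
      simp only [Set.mem_empty_iff_false, iff_false]
      intro hl
      cases l with
      | nil => exact hT [] hl rfl
      | cons a l => exact hX.elim a
  · letI : Inhabited X := Classical.inhabited_of_nonempty hX
    letI := TopologicalSpace.upgradeIsCompletelyMetrizable X
    obtain ⟨s, hsc, hsd⟩ := TopologicalSpace.exists_countable_dense X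
    obtain ⟨α, hα, hempty⟩ :=
      exists_empty_iter (Wtree T s) (wtree_countable T hsc) (wtree_wf T hcl hwf s)
    refine ⟨α, hα, ?_⟩
    rw [Set.eq_empty_iff_forall_notMem]
    intro l hl
    have hlT : l ∈ T := by
      have := iter_antitone T (zero_le (a := α)) hl
      rwa [iter_zero] at this
    have hεpos : (0:ℝ) < (2⁻¹ : ℝ) ^ (0 + 1) := by norm_num
    obtain ⟨d, hdC, hds⟩ := exists_approx hsd l hεpos
    have hmem : [[d]] ∈ derivTreeIter (Wtree T s) α := by
      refine node_mem_iter T hsd α 0 [[d]] (fun _ => l) rfl ?_ ?_ ?_ hl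
      · intro j hj
        simp only [List.length_singleton] at hj
        have hj0 : j = 0 := by omega
        subst hj0
        refine ⟨by simp [hdC.1.symm], ?_⟩
        intro p hp
        simp only [List.getD_cons_zero, List.mem_singleton] at hp
        subst hp
        exact hds
      · constructor
        · intro i hi
          simp only [List.length_singleton] at hi
          exact hlT
        · intro i hi
          simp only [List.length_singleton] at hi
          omega
      · intro j hj i hij
        simp only [List.length_singleton] at hj
        have hj0 : j = 0 := by omega
        have hi0 : i = 0 := by omega
        subst hj0; subst hi0
        simpa using hdC
    rw [hempty] at hmem
    exact hmem
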